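/- arXiv:1405.1189 — 3 statements merged into one kernel-verified Lean document; each statement's English description precedes it below -/
import Mathlib

section
/- Let S ⊆ ℤ^d be a set closed under taking midpoints of pairs of its elements that agree modulo 2 in every coordinate. Let λ : S → ℕ be a finitely supported function with |supp(λ)| > 2^d. Then there exists a finitely supported μ : S → ℕ with Σ_{z∈S} μ(z) = Σ_{z∈S} λ(z), Σ_{z∈S} μ(z)·z = Σ_{z∈S} λ(z)·z, and Σ_{z∈S} μ(z)·‖z‖² < Σ_{z∈S} λ(z)·‖z‖². -/
private lemma aux_sum3 {α M : Type*} [AddCommMonoid M]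
    (mu lam : α →₀ ℕ) (y' y'' y : α)
    (key : mu + Finsupp.single y' 1 + Finsupp.single y'' 1
      = lam + Finsupp.single y 2)
    (h : α → ℕ → M) (h0 : ∀ a, h a 0 = 0)
    (hadd : ∀ a b c, h a (b + c) = h a b + h a c) :
    mu.sum h + h y' 1 + h y'' 1 = lam.sum h + h y 2 := by
  have := congrArg (Finsupp.sum · h) key
  rwa [Finsupp.sum_add_index' h0 hadd, Finsupp.sum_add_index' h0 hadd,
    Finsupp.sum_add_index' h0 hadd, Finsupp.sum_single_index (h0 _),
    Finsupp.sum_single_index (h0 _), Finsupp.sum_single_index (h0 _)] at this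

/-- Support-reduction step: if a midpoint-closed set `S ⊆ ℤ^d` carries a
finitely supported multiplicity function `λ` with more than `2^d` support
points, then merging two same-parity support points into their midpoint gives
`μ` with the same total count and vector sum but strictly smaller total
squared norm. -/
theorem support_reduction_step (d : ℕ) (S : Set (Fin d → ℤ))
    (hmid : ∀ y' ∈ S, ∀ y'' ∈ S, (∀ j, y' j % 2 = y'' j % 2) →
      ∀ y : Fin d → ℤ, (∀ j, 2 * y j = y' j + y'' j) → y ∈ S)
    (lam : (Fin d → ℤ) →₀ ℕ) (hsupp : ↑lam.support ⊆ S)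
    (hcard : 2 ^ d < lam.support.card) :
    ∃ mu : (Fin d → ℤ) →₀ ℕ, ↑mu.support ⊆ S ∧
      mu.sum (fun _ m => m) = lam.sum (fun _ m => m) ∧
      mu.sum (fun z m => (m : ℤ) • z) = lam.sum (fun z m => (m : ℤ) • z) ∧
      mu.sum (fun z m => (m : ℤ) * ∑ j, (z j) ^ 2)
        < lam.sum (fun z m => (m : ℤ) * ∑ j, (z j) ^ 2) := by
  -- pigeonhole: two support points with the same parity in every coordinate
  have hcard' : (Finset.univ : Finset (Fin d → ZMod 2)).card < lam.support.card := by
    simpa using hcard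
  obtain ⟨y', hy', y'', hy'', hne, hpar0⟩ :=
    Finset.exists_ne_map_eq_of_card_lt_of_maps_to hcard'
      (fun z _ => Finset.mem_univ (fun j => (z j : ZMod 2)))
  have hpar : ∀ j, y' j % 2 = y'' j % 2 := by
    intro j
    have h2 : ((y' j : ZMod 2) = (y'' j : ZMod 2)) := congrFun hpar0 j
    rw [ZMod.intCast_eq_intCast_iff'] at h2
    exact_mod_cast h2
  set y : Fin d → ℤ := fun j => (y' j + y'' j) / 2 with hy
  have hyj : ∀ j, 2 * y j = y' j + y'' j := by
    intro j
    have hp := hpar j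
    have hdvd : (2 : ℤ) ∣ y' j + y'' j := by omega
    exact Int.mul_ediv_cancel' hdvd
  have hyS : y ∈ S := hmid y' (hsupp hy') y'' (hsupp hy'') hpar y hyj
  have hy'ne : lam y' ≠ 0 := Finsupp.mem_support_iff.mp hy'
  have hy''ne : lam y'' ≠ 0 := Finsupp.mem_support_iff.mp hy''
  set nu : (Fin d → ℤ) →₀ ℕ := lam - Finsupp.single y' 1 - Finsupp.single y'' 1 with hnu
  set mu : (Fin d → ℤ) →₀ ℕ := nu + Finsupp.single y 2 with hmu
  have key : mu + Finsupp.single y' 1 + Finsupp.single y'' 1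
      = lam + Finsupp.single y 2 := by
    ext a
    simp only [hmu, hnu, Finsupp.add_apply, Finsupp.tsub_apply, Finsupp.single_apply]
    by_cases h1 : y' = a <;> by_cases h2 : y'' = a <;>
      simp_all <;> omega
  refine ⟨mu, ?_, ?_, ?_, ?_⟩
  · -- support
    intro a ha
    simp only [Finset.mem_coe, hmu] at ha ⊢
    have := Finsupp.support_add (g₁ := nu) (g₂ := Finsupp.single y 2) ha
    rcases Finset.mem_union.mp this with h | h
    · have : a ∈ lam.support := by
        have := Finsupp.support_tsub
          (f1 := lam - Finsupp.single y' 1) (f2 := Finsupp.single y'' 1) h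
        exact Finsupp.support_tsub this
      exact hsupp this
    · have : a = y := by
        have := Finsupp.support_single_subset h
        simpa using this
      subst this; exact hyS
  · -- total count
    have := aux_sum3 mu lam y' y'' y key (fun _ m => m)
      (fun _ => rfl) (fun _ _ _ => rfl)
    omega
  · -- vector sum
    have hsum := aux_sum3 mu lam y' y'' y key (fun z m => (m : ℤ) • z)
      (by intro z; simp) (by intro z a b; push_cast; rw [add_smul])
    have h2y : ((2 : ℕ) : ℤ) • y = ((1 : ℕ) : ℤ) • y' + ((1 : ℕ) : ℤ) • y'' := by
      funext j
      simp only [Pi.add_apply, Pi.smul_apply, smul_eq_mul]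
      have := hyj j
      omega
    rw [h2y] at hsum
    have : mu.sum (fun z m => (m : ℤ) • z) + (((1:ℕ):ℤ) • y' + ((1:ℕ):ℤ) • y'')
        = lam.sum (fun z m => (m : ℤ) • z) + (((1:ℕ):ℤ) • y' + ((1:ℕ):ℤ) • y'') := by
      rw [← add_assoc]; exact hsum
    exact add_right_cancel this
  · -- squared norm
    have hkey := aux_sum3 mu lam y' y'' y key
      (fun z m => (m : ℤ) * ∑ j, (z j) ^ 2)
      (by intro z; simp) (by intro z a b; push_cast; ring)
    simp only [Nat.cast_one, Nat.cast_ofNat, one_mul] at hkey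
    have hlt : ((2 : ℕ) : ℤ) * (∑ j, (y j) ^ 2)
        < (∑ j, (y' j) ^ 2) + (∑ j, (y'' j) ^ 2) := by
      have hj : ∃ j, y' j ≠ y'' j := by
        by_contra h
        push_neg at h
        exact hne (funext h)
      obtain ⟨j0, hj0⟩ := hj
      have hsl : ∑ j, 2 * (y j) ^ 2 < ∑ j, ((y' j) ^ 2 + (y'' j) ^ 2) := by
        refine Finset.sum_lt_sum (fun j _ => ?_) ⟨j0, Finset.mem_univ _, ?_⟩
        · have h1 := hyj j
          have h4 : (2 * y j) ^ 2 = (y' j + y'' j) ^ 2 := by rw [h1]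
          nlinarith [sq_nonneg (y' j - y'' j)]
        · have h1 := hyj j0
          have h4 : (2 * y j0) ^ 2 = (y' j0 + y'' j0) ^ 2 := by rw [h1]
          nlinarith [sq_nonneg (y' j0 - y'' j0), sq_pos_of_ne_zero (sub_ne_zero.mpr hj0)]
      push_cast
      calc 2 * (∑ j, (y j) ^ 2) = ∑ j, 2 * (y j) ^ 2 := by rw [Finset.mul_sum]
        _ < ∑ j, ((y' j) ^ 2 + (y'' j) ^ 2) := hsl
        _ = (∑ j, (y' j) ^ 2) + (∑ j, (y'' j) ^ 2) := Finset.sum_add_distrib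
    push_cast at hkey hlt ⊢
    linarith
end

section
/- Let S ⊆ ℤ^d be a finite set closed under taking midpoints of pairs of its elements that agree modulo 2 in every coordinate. For every finitely supported λ : S → ℕ there exists a finitely supported μ : S → ℕ with |supp(μ)| ≤ 2^d, Σ_{z} μ(z) = Σ_{z} λ(z), and Σ_{z} μ(z)·z = Σ_{z} λ(z)·z. -/
private lemma es_aux_div (a b : ℤ) (h : a % 2 = b % 2) : 2 * ((a + b) / 2) = a + b := by
  omega

private lemma es_aux_toNat (A B C : ℤ) (hA : 0 ≤ A) (hB : 0 ≤ B) (hC : 0 ≤ C)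
    (h : 2 * A < B + C) : 2 * A.toNat < B.toNat + C.toNat := by omega

/-- Eisenbrand–Shmonin sparse representation: over a finite midpoint-closed
set `S ⊆ ℤ^d`, every multiplicity function `λ` can be replaced by one with
support of size at most `2^d` having the same total count and vector sum. -/
theorem sparse_representation (d : ℕ) (S : Set (Fin d → ℤ)) (hfin : S.Finite)
    (hmid : ∀ y' ∈ S, ∀ y'' ∈ S, (∀ j, y' j % 2 = y'' j % 2) →
      ∀ y : Fin d → ℤ, (∀ j, 2 * y j = y' j + y'' j) → y ∈ S)
    (lam : (Fin d → ℤ) →₀ ℕ) (hsupp : ↑lam.support ⊆ S) :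
    ∃ mu : (Fin d → ℤ) →₀ ℕ, ↑mu.support ⊆ S ∧
      mu.support.card ≤ 2 ^ d ∧
      mu.sum (fun _ m => m) = lam.sum (fun _ m => m) ∧
      mu.sum (fun z m => (m : ℤ) • z) = lam.sum (fun z m => (m : ℤ) • z) := by
  classical
  suffices H : ∀ n (f : (Fin d → ℤ) →₀ ℕ),
      f.sum (fun z m => m * (∑ j, (z j)^2).toNat) = n →
      ↑f.support ⊆ S → ∃ mu : (Fin d → ℤ) →₀ ℕ, ↑mu.support ⊆ S ∧
      mu.support.card ≤ 2 ^ d ∧ mu.sum (fun _ m => m) = f.sum (fun _ m => m) ∧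
      mu.sum (fun z m => (m : ℤ) • z) = f.sum (fun z m => (m : ℤ) • z) by
    exact H _ lam rfl hsupp
  intro n
  induction n using Nat.strong_induction_on with
  | _ n ih =>
  intro f hPhi hfS
  by_cases hcard : f.support.card ≤ 2 ^ d
  · exact ⟨f, hfS, hcard, rfl, rfl⟩
  push_neg at hcard
  -- pigeonhole: two support points agree mod 2 in every coordinate
  obtain ⟨y', hy's, y'', hy''s, hne, hmod⟩ :=
    Finset.exists_ne_map_eq_of_card_lt_of_maps_to
      (s := f.support)
      (t := Fintype.piFinset fun _ : Fin d => ({0, 1} : Finset ℤ))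
      (f := fun (z : Fin d → ℤ) (j : Fin d) => z j % 2)
      (by
        have : (Fintype.piFinset fun _ : Fin d => ({0, 1} : Finset ℤ)).card = 2 ^ d := by
          simp [Fintype.card_piFinset]
        rw [this]; exact hcard)
      (fun z _ => by
        rw [Finset.mem_coe, Fintype.mem_piFinset]
        intro j
        simp only [Finset.mem_insert, Finset.mem_singleton]
        exact Int.emod_two_eq _)
  have hmodj : ∀ j, y' j % 2 = y'' j % 2 := fun j => congrFun hmod j
  set y : Fin d → ℤ := fun j => (y' j + y'' j) / 2 with hy
  have h2y : ∀ j, 2 * y j = y' j + y'' j := by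
    intro j
    show 2 * ((y' j + y'' j) / 2) = y' j + y'' j
    exact es_aux_div _ _ (hmodj j)
  have hyS : y ∈ S :=
    hmid y' (hfS (Finset.mem_coe.mpr hy's)) y'' (hfS (Finset.mem_coe.mpr hy''s)) hmodj y h2y
  -- multiplicities at y', y'' are positive
  have hv' : 1 ≤ f y' := Nat.one_le_iff_ne_zero.mpr (Finsupp.mem_support_iff.mp hy's)
  have hv'' : 1 ≤ f y'' := Nat.one_le_iff_ne_zero.mpr (Finsupp.mem_support_iff.mp hy''s)
  set g : (Fin d → ℤ) →₀ ℕ := Finsupp.single y' 1 + Finsupp.single y'' 1 with hg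
  have hle : g ≤ f := by
    rw [Finsupp.le_def]
    intro a
    simp only [hg, Finsupp.add_apply, Finsupp.single_apply]
    split_ifs with h1 h2 h2
    · exact absurd (h1.trans h2.symm) hne
    · subst h1; simpa using hv'
    · subst h2; simpa using hv''
    · simp
  set f'' : (Fin d → ℤ) →₀ ℕ := f - g with hf''
  have hsub : f'' + g = f := tsub_add_cancel_of_le hle
  set f' : (Fin d → ℤ) →₀ ℕ := f'' + Finsupp.single y 2 with hf'
  -- support of f' lies in S
  have hsupp' : ↑f'.support ⊆ S := by
    intro z hz
    simp only [Finset.mem_coe] at hz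
    have h1 := Finsupp.support_add hz
    rcases Finset.mem_union.mp h1 with h2 | h2
    · have h3 : z ∈ f.support := Finsupp.support_tsub h2
      exact hfS (Finset.mem_coe.mpr h3)
    · have h3 : z = y := Finset.mem_singleton.mp (Finsupp.support_single_subset h2)
      exact h3 ▸ hyS
  -- generic additivity facts
  have hcnt_add : ∀ (a b : (Fin d → ℤ) →₀ ℕ),
      (a + b).sum (fun _ m => m) = a.sum (fun _ m => m) + b.sum (fun _ m => m) :=
    fun a b => Finsupp.sum_add_index' (fun _ => rfl) (fun _ _ _ => rfl)
  have hvec_add : ∀ (a b : (Fin d → ℤ) →₀ ℕ),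
      (a + b).sum (fun z m => (m : ℤ) • z)
        = a.sum (fun z m => (m : ℤ) • z) + b.sum (fun z m => (m : ℤ) • z) :=
    fun a b => Finsupp.sum_add_index' (fun _ => by simp)
      (fun z m₁ m₂ => by push_cast; rw [add_smul])
  have hpot_add : ∀ (a b : (Fin d → ℤ) →₀ ℕ),
      (a + b).sum (fun z m => m * (∑ j, (z j)^2).toNat)
        = a.sum (fun z m => m * (∑ j, (z j)^2).toNat)
          + b.sum (fun z m => m * (∑ j, (z j)^2).toNat) :=
    fun a b => Finsupp.sum_add_index' (fun _ => zero_mul _) (fun z m₁ m₂ => add_mul _ _ _)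
  -- the key quadratic decrease
  have hkey : 2 * (∑ j, (y j)^2).toNat
      < (∑ j, (y' j)^2).toNat + (∑ j, (y'' j)^2).toNat := by
    have hA : (0 : ℤ) ≤ ∑ j, (y j)^2 := Finset.sum_nonneg fun j _ => sq_nonneg _
    have hB : (0 : ℤ) ≤ ∑ j, (y' j)^2 := Finset.sum_nonneg fun j _ => sq_nonneg _
    have hC : (0 : ℤ) ≤ ∑ j, (y'' j)^2 := Finset.sum_nonneg fun j _ => sq_nonneg _
    have hpos : (0 : ℤ) < ∑ j, (y' j - y'' j)^2 := by
      apply Finset.sum_pos' (fun j _ => sq_nonneg _)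
      obtain ⟨j, hj⟩ : ∃ j, y' j ≠ y'' j := by
        by_contra h
        push_neg at h
        exact hne (funext h)
      exact ⟨j, Finset.mem_univ j, by have h0 : y' j - y'' j ≠ 0 := sub_ne_zero.mpr hj; positivity⟩
    have hid : (∑ j, (4 * (y j)^2 + (y' j - y'' j)^2))
        = ∑ j, (2 * (y' j)^2 + 2 * (y'' j)^2) :=
      Finset.sum_congr rfl fun j _ => by linear_combination (2 * y j + y' j + y'' j) * (h2y j)
    simp only [Finset.sum_add_distrib, ← Finset.mul_sum] at hid
    have h2 : 2 * (∑ j, (y j)^2) < (∑ j, (y' j)^2) + (∑ j, (y'' j)^2) := by linarith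
    exact es_aux_toNat _ _ _ hA hB hC h2
  -- potential strictly decreases
  have hPhi' : f'.sum (fun z m => m * (∑ j, (z j)^2).toNat) < n := by
    have e1 : f'.sum (fun z m => m * (∑ j, (z j)^2).toNat)
        = f''.sum (fun z m => m * (∑ j, (z j)^2).toNat) + 2 * (∑ j, (y j)^2).toNat := by
      rw [hf', hpot_add, Finsupp.sum_single_index (by simp)]
    have e2 : f.sum (fun z m => m * (∑ j, (z j)^2).toNat)
        = f''.sum (fun z m => m * (∑ j, (z j)^2).toNat)
          + (1 * (∑ j, (y' j)^2).toNat + 1 * (∑ j, (y'' j)^2).toNat) := by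
      rw [← hsub, hpot_add, hg, hpot_add,
        Finsupp.sum_single_index (by simp), Finsupp.sum_single_index (by simp)]
    rw [e1, ← hPhi, e2]
    have hk := hkey
    linarith
  obtain ⟨mu, hmuS, hmucard, hmucnt, hmuvec⟩ := ih _ hPhi' f' rfl hsupp'
  refine ⟨mu, hmuS, hmucard, ?_, ?_⟩
  · rw [hmucnt]
    rw [hf', hcnt_add, Finsupp.sum_single_index rfl, ← hsub, hcnt_add, hg, hcnt_add,
      Finsupp.sum_single_index rfl, Finsupp.sum_single_index rfl]
  · rw [hmuvec]
    have hysum : ((2 : ℕ) : ℤ) • y = ((1 : ℕ) : ℤ) • y' + ((1 : ℕ) : ℤ) • y'' := by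
      funext j
      simp only [Pi.add_apply, Pi.smul_apply, smul_eq_mul]
      push_cast
      have := h2y j
      linarith
    rw [hf', hvec_add, Finsupp.sum_single_index (by simp), ← hsub, hvec_add, hg, hvec_add,
      Finsupp.sum_single_index (by simp), Finsupp.sum_single_index (by simp), hysum]
end

section
/- Let the huge threeway table problem with line-sums g ∈ ℤ₊^{l×m}, and for k = 1,…,t column-sums e^k ∈ ℤ₊^m, row-sums f^k ∈ ℤ₊^l, and multiplicities n_k with Σ n_k = n, be feasible. Then it has a solution x = (x¹,…,xⁿ) in which the number of distinct l×m matrices occurring among the bricks of type k is at most 2^{lm}, for each k = 1,…,t. -/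
/-- If the huge threeway table problem (with line-sums `g`, and for each type
`k` row-sums `f^k`, column-sums `e^k` and multiplicity `n_k`) is feasible,
then it has a solution in which at most `2^{lm}` distinct `l×m` matrices occur
among the layers of each type. -/
theorem huge_table_sparse_solution (l m t n : ℕ)
    (g : Fin l × Fin m → ℤ) (hg : 0 ≤ g)
    (e : Fin t → Fin m → ℤ) (f : Fin t → Fin l → ℤ)
    (he : ∀ k, 0 ≤ e k) (hf : ∀ k, 0 ≤ f k)
    (nk : Fin t → ℕ) (hn : ∑ k, nk k = n)
    (τ : Fin n → Fin t)
    (hτ : ∀ k, (Finset.univ.filter fun i => τ i = k).card = nk k)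
    (hfeas : ∃ x : Fin n → Fin l × Fin m → ℤ,
        (∀ i, 0 ≤ x i ∧ (∀ a, ∑ b, x i (a, b) = f (τ i) a) ∧
          (∀ b, ∑ a, x i (a, b) = e (τ i) b)) ∧
        (∀ p, ∑ i, x i p = g p)) :
    ∃ x : Fin n → Fin l × Fin m → ℤ,
      ((∀ i, 0 ≤ x i ∧ (∀ a, ∑ b, x i (a, b) = f (τ i) a) ∧
          (∀ b, ∑ a, x i (a, b) = e (τ i) b)) ∧
        (∀ p, ∑ i, x i p = g p)) ∧
      ∀ k, ((Finset.univ.filter fun i => τ i = k).image x).card ≤ 2 ^ (l * m) := by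
  obtain ⟨x0, hx0⟩ := hfeas
  set Sol : (Fin n → Fin l × Fin m → ℤ) → Prop := fun x =>
    (∀ i, 0 ≤ x i ∧ (∀ a, ∑ b, x i (a, b) = f (τ i) a) ∧
        (∀ b, ∑ a, x i (a, b) = e (τ i) b)) ∧
      (∀ p, ∑ i, x i p = g p) with hSol
  have main : ∀ N (x : Fin n → Fin l × Fin m → ℤ),
      (∑ i, ∑ p, (x i p)^2).toNat ≤ N → Sol x →
      ∃ x', Sol x' ∧
        ∀ k, ((Finset.univ.filter fun i => τ i = k).image x').card ≤ 2 ^ (l * m) := by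
    intro N
    induction N using Nat.strong_induction_on with
    | _ N ih =>
      intro x hμ hsol
      by_cases hsp : ∀ k, ((Finset.univ.filter fun i => τ i = k).image x).card ≤ 2 ^ (l * m)
      · exact ⟨x, hsol, hsp⟩
      push_neg at hsp
      obtain ⟨k, hk⟩ := hsp
      -- pigeonhole on parity vectors
      have hcard : (Finset.univ : Finset (Fin l × Fin m → ZMod 2)).card
          < ((Finset.univ.filter fun i => τ i = k).image x).card := by
        rwa [Finset.card_univ, Fintype.card_fun, ZMod.card, Fintype.card_prod,
          Fintype.card_fin, Fintype.card_fin]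
      obtain ⟨y, hy, z, hz, hyz, hpar⟩ :=
        Finset.exists_ne_map_eq_of_card_lt_of_maps_to hcard
          (fun (a : Fin l × Fin m → ℤ) _ => Finset.mem_univ
            (fun p => ((a p : ZMod 2) : ZMod 2)))
      obtain ⟨i, hi, hxi⟩ := Finset.mem_image.mp hy
      obtain ⟨j, hj, hxj⟩ := Finset.mem_image.mp hz
      have hik : τ i = k := (Finset.mem_filter.mp hi).2
      have hjk : τ j = k := (Finset.mem_filter.mp hj).2
      have hij : i ≠ j := by
        rintro rfl; exact hyz (hxi.symm.trans hxj)
      -- the midpoint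
      have hdvd : ∀ p, (2 : ℤ) ∣ y p + z p := by
        intro p
        have hc := (ZMod.intCast_eq_intCast_iff _ _ _).mp (congrFun hpar p)
        obtain ⟨c, hc⟩ := hc.dvd
        exact ⟨z p - c, by omega⟩
      set h : Fin l × Fin m → ℤ := fun p => (y p + z p) / 2 with hh
      have h2 : ∀ p, 2 * h p = y p + z p := fun p => Int.mul_ediv_cancel' (hdvd p)
      set x' : Fin n → Fin l × Fin m → ℤ :=
        fun i' => if i' = i then h else if i' = j then h else x i' with hx'
      have hx'i : x' i = h := by simp [hx']
      have hx'j : x' j = h := by simp [hx', hij.symm]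
      have hx'o : ∀ i', i' ≠ i → i' ≠ j → x' i' = x i' := by
        intro i' h1 h2; simp [hx', h1, h2]
      -- facts about y, z from hsol
      obtain ⟨hy0, hyr, hyc⟩ := hsol.1 i
      obtain ⟨hz0, hzr, hzc⟩ := hsol.1 j
      rw [hxi] at hy0 hyr hyc
      rw [hxj] at hz0 hzr hzc
      rw [hik] at hyr hyc
      rw [hjk] at hzr hzc
      -- h is admissible for type k
      have hh0 : (0 : Fin l × Fin m → ℤ) ≤ h := by
        intro p
        have h1 := add_nonneg (hy0 p) (hz0 p)
        have h3 := h2 p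
        simp only [Pi.zero_apply]
        linarith
      have hhr : ∀ a, ∑ b, h (a, b) = f k a := by
        intro a
        have : 2 * ∑ b, h (a, b) = 2 * f k a := by
          rw [Finset.mul_sum]
          simp only [h2]
          rw [Finset.sum_add_distrib, hyr a, hzr a]; ring
        omega
      have hhc : ∀ b, ∑ a, h (a, b) = e k b := by
        intro b
        have : 2 * ∑ a, h (a, b) = 2 * e k b := by
          rw [Finset.mul_sum]
          simp only [h2]
          rw [Finset.sum_add_distrib, hyc b, hzc b]; ring
        omega
      -- splitting sums at i and j
      have split : ∀ (F : Fin n → ℤ),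
          ∑ i', F i' = ∑ i' ∈ Finset.univ \ {i, j}, F i' + (F i + F j) := by
        intro F
        rw [← Finset.sum_pair hij, Finset.sum_sdiff (Finset.subset_univ _)]
      have hsdiff : ∀ i' ∈ Finset.univ \ ({i, j} : Finset (Fin n)), x' i' = x i' := by
        intro i' hi'
        simp only [Finset.mem_sdiff, Finset.mem_insert, Finset.mem_singleton, not_or] at hi'
        exact hx'o i' hi'.2.1 hi'.2.2
      have hsol' : Sol x' := by
        constructor
        · intro i'
          by_cases h1 : i' = i
          · subst h1; rw [hx'i, hik]; exact ⟨hh0, hhr, hhc⟩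
          by_cases h2 : i' = j
          · subst h2; rw [hx'j, hjk]; exact ⟨hh0, hhr, hhc⟩
          · rw [hx'o i' h1 h2]; exact hsol.1 i'
        · intro p
          have e1 : ∑ i' ∈ Finset.univ \ {i, j}, x' i' p
              = ∑ i' ∈ Finset.univ \ {i, j}, x i' p :=
            Finset.sum_congr rfl fun i' hi' => by rw [hsdiff i' hi']
          have e2 : x' i p + x' j p = x i p + x j p := by
            rw [hx'i, hx'j, hxi, hxj]
            have := h2 p; omega
          have hgp := hsol.2 p
          rw [split (fun i' => x i' p)] at hgp
          rw [split (fun i' => x' i' p), e1, e2]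
          exact hgp
      -- measure decreases
      have hlt : ∑ i', ∑ p, (x' i' p)^2 < ∑ i', ∑ p, (x i' p)^2 := by
        rw [split (fun i' => ∑ p, (x' i' p)^2), split (fun i' => ∑ p, (x i' p)^2)]
        have e1 : ∑ i' ∈ Finset.univ \ {i, j}, ∑ p, (x' i' p)^2
            = ∑ i' ∈ Finset.univ \ {i, j}, ∑ p, (x i' p)^2 :=
          Finset.sum_congr rfl fun i' hi' => by rw [hsdiff i' hi']
        rw [e1]
        apply add_lt_add_right
        rw [hx'i, hx'j, hxi, hxj, ← Finset.sum_add_distrib, ← Finset.sum_add_distrib]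
        apply Finset.sum_lt_sum
        · intro p _
          have hq : (2 * h p)^2 = (y p + z p)^2 := by rw [h2 p]
          nlinarith [sq_nonneg (y p - z p), hq]
        · obtain ⟨p, hp⟩ := Function.ne_iff.mp hyz
          refine ⟨p, Finset.mem_univ p, ?_⟩
          have hq : (2 * h p)^2 = (y p + z p)^2 := by rw [h2 p]
          have hpos : 0 < (y p - z p)^2 := by
            have := sub_ne_zero.mpr hp
            positivity
          nlinarith [hq, hpos]
      -- nonnegativity of measure for toNat
      have hnn : 0 ≤ ∑ i', ∑ p, (x' i' p)^2 :=
        Finset.sum_nonneg fun i' _ => Finset.sum_nonneg fun p _ => sq_nonneg _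
      have hμ' : (∑ i', ∑ p, (x' i' p)^2).toNat < N := by omega
      exact ih _ hμ' x' le_rfl hsol'
  exact main _ x0 le_rfl hx0
end
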